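/- Let K and h be Hilbert spaces, with κ = (e_i)_{i∈I} an orthonormal basis for h. Define the κ-Schur product of R, T ∈ B(K ⊗ h) as the operator R ⊙ T whose matrix components satisfy ⟨e_i-component⟩: E^{e_i}(R ⊙ T)E_{e_j} = (E^{e_i} R E_{e_j})(E^{e_i} T E_{e_j}). If R ≥ 0 and T = I_K ⊗ T₀ for some T₀ ∈ B(h) with T ≥ 0, then R ⊙ T ≥ 0. -/

import Mathlib

open ContinuousLinearMap
open scoped ComplexOrder

lemma inner_pos_aux {HK : Type*} [NormedAddCommGroup HK] [InnerProductSpace ℂ HK]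
    [CompleteSpace HK] {S : HK →L[ℂ] HK} (hS : S.IsPositive) (w : HK) :
    0 ≤ (inner ℂ w (S w) : ℂ) := by
  have hsym := hS.1
  rw [Complex.le_def]
  refine ⟨?_, ?_⟩
  · have := hS.inner_nonneg_right w
    simpa using (Complex.le_def.mp this).1
  · have h1 : (inner ℂ (S w) w : ℂ) = inner ℂ w (S w) := hsym w w
    have h2 : (starRingEnd ℂ) (inner ℂ w (S w) : ℂ) = inner ℂ (S w) w := by
      exact inner_conj_symm _ _
    have h3 : (starRingEnd ℂ) (inner ℂ w (S w) : ℂ) = inner ℂ w (S w) := by rw [h2, h1]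
    have := Complex.conj_eq_iff_im.mp h3
    simpa using this.symm

lemma key_lemma {n : Type*} [Fintype n] [DecidableEq n] {HK : Type*} [NormedAddCommGroup HK]
    [InnerProductSpace ℂ HK] [CompleteSpace HK] (R T : HK →L[ℂ] HK)
    (hR : R.IsPositive) (hT : T.IsPositive) (u w : n → HK) :
    0 ≤ ∑ i, ∑ j, (inner ℂ (w i) (T (w j)) : ℂ) * (inner ℂ (u i) (R (u j)) : ℂ) := by
  set C : Matrix n n ℂ := Matrix.of fun i j => (inner ℂ (w i) (T (w j)) : ℂ) with hC
  have hsym := hT.1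
  have hCpsd : C.PosSemidef := by
    refine Matrix.posSemidef_iff_dotProduct_mulVec.mpr ⟨?_, ?_⟩
    · ext i j
      simp only [Matrix.conjTranspose_apply, hC, Matrix.of_apply]
      rw [← inner_conj_symm, starRingEnd_apply, star_star]
      exact hsym (w i) (w j)
    · intro v
      have hexp : dotProduct (star v) (C.mulVec v)
          = (inner ℂ (∑ i, v i • w i) (T (∑ j, v j • w j)) : ℂ) := by
        simp only [dotProduct, Matrix.mulVec, Pi.star_apply, hC, Matrix.of_apply,
          map_sum, inner_sum, sum_inner, inner_smul_left, inner_smul_right,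
          ContinuousLinearMap.map_smul, Finset.mul_sum, starRingEnd_apply]
        rw [Finset.sum_comm]
        exact Finset.sum_congr rfl fun i _ => Finset.sum_congr rfl fun j _ => by ring
      rw [hexp]
      exact inner_pos_aux hT _
  obtain ⟨B, hB⟩ : ∃ B : Matrix n n ℂ, C = B.conjTranspose * B := by
    open scoped MatrixOrder in
    exact CStarAlgebra.nonneg_iff_eq_star_mul_self.mp hCpsd.nonneg
  have hCij : ∀ i j, (inner ℂ (w i) (T (w j)) : ℂ) = ∑ k, star (B k i) * B k j := by
    intro i j
    have h := congrFun (congrFun hB i) j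
    simpa [Matrix.mul_apply, hC] using h
  have expand : ∀ k, (inner ℂ (∑ i, B k i • u i) (R (∑ j, B k j • u j)) : ℂ)
      = ∑ i, ∑ j, star (B k i) * B k j * (inner ℂ (u i) (R (u j)) : ℂ) := by
    intro k
    simp only [map_sum, ContinuousLinearMap.map_smul, inner_sum, sum_inner,
      inner_smul_left, inner_smul_right, starRingEnd_apply, Finset.mul_sum]
    rw [Finset.sum_comm]
    exact Finset.sum_congr rfl fun i _ => Finset.sum_congr rfl fun j _ => by ring
  calc (0:ℂ) ≤ ∑ k, (inner ℂ (∑ i, B k i • u i) (R (∑ j, B k j • u j)) : ℂ) := by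
        exact Finset.sum_nonneg fun k _ => inner_pos_aux hR _
    _ = ∑ k, ∑ i, ∑ j, star (B k i) * B k j * (inner ℂ (u i) (R (u j)) : ℂ) :=
        Finset.sum_congr rfl fun k _ => expand k
    _ = ∑ i, ∑ k, ∑ j, star (B k i) * B k j * (inner ℂ (u i) (R (u j)) : ℂ) :=
        Finset.sum_comm
    _ = ∑ i, ∑ j, ∑ k, star (B k i) * B k j * (inner ℂ (u i) (R (u j)) : ℂ) :=
        Finset.sum_congr rfl fun i _ => Finset.sum_comm
    _ = ∑ i, ∑ j, (inner ℂ (w i) (T (w j)) : ℂ) * (inner ℂ (u i) (R (u j)) : ℂ) :=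
        Finset.sum_congr rfl fun i _ => Finset.sum_congr rfl fun j _ => by
          rw [hCij i j, Finset.sum_mul]


/-- Positivity of the `κ`-Schur product.  The Hilbert space `K ⊗ h` is realised as a
Hilbert space `HK` equipped with a family of embeddings `E i = I_K ⊗ |e i⟩` (for `κ = (e i)`
an orthonormal basis of `h`) which are mutually orthogonal isometries with total joint range.
If `P` is the κ-Schur product of `R` and `T`, i.e. `E i* P (E j) = (E i* R E j)(E i* T E j)`
for all `i, j`, and if `R ≥ 0` and `T = I_K ⊗ T₀ ≥ 0` (the latter expressed by saying that
every matrix component `E i* T E j` is a scalar multiple of the identity), then `P ≥ 0`. -/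
theorem schur_product_positive {I : Type*} [DecidableEq I] {K HK : Type*}
    [NormedAddCommGroup K] [InnerProductSpace ℂ K] [CompleteSpace K]
    [NormedAddCommGroup HK] [InnerProductSpace ℂ HK] [CompleteSpace HK]
    (E : I → (K →L[ℂ] HK))
    (horth : ∀ i j, (adjoint (E i)) ∘L E j = if i = j then (1 : K →L[ℂ] K) else 0)
    (htotal : (⨆ i, LinearMap.range ((E i : K →L[ℂ] HK) : K →ₗ[ℂ] HK)).topologicalClosure = ⊤)
    (R T P : HK →L[ℂ] HK)
    (hR : R.IsPositive)
    (hT : T.IsPositive)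
    (hTamp : ∀ i j, ∃ c : ℂ, (adjoint (E i)) ∘L T ∘L E j = c • (1 : K →L[ℂ] K))
    (hP : ∀ i j, (adjoint (E i)) ∘L P ∘L E j
        = ((adjoint (E i)) ∘L R ∘L E j) * ((adjoint (E i)) ∘L T ∘L E j)) :
    P.IsPositive := by
  classical
  choose c hc using hTamp
  -- Step 1: the inequality on the dense submodule
  have hkey : ∀ x : HK, x ∈ (⨆ i, LinearMap.range ((E i : K →L[ℂ] HK) : K →ₗ[ℂ] HK)) →
      0 ≤ (inner ℂ x (P x) : ℂ) := by
    intro x hx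
    rw [Submodule.mem_iSup_iff_exists_finsupp] at hx
    obtain ⟨f, hf, rfl⟩ := hx
    have hg : ∀ i, ∃ y : K, E i y = f i := fun i => hf i
    choose g hgspec using hg
    by_cases hK : Nontrivial K
    · obtain ⟨v, hv⟩ := exists_ne (0 : K)
      set u0 : K := ‖v‖⁻¹ • v with hu0def
      have hu0 : ‖u0‖ = 1 := by
        rw [hu0def, norm_smul, norm_inv, norm_norm]
        field_simp [norm_ne_zero_iff.mpr hv]
      have hu0self : (inner ℂ u0 u0 : ℂ) = 1 := by
        rw [inner_self_eq_norm_sq_to_K, hu0]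
        norm_num
      have hcval : ∀ i j, c i j = (inner ℂ (E i u0) (T (E j u0)) : ℂ) := by
        intro i j
        have h1 : ((adjoint (E i)) ∘L T ∘L E j) u0 = c i j • u0 := by
          rw [hc i j]; simp
        have h2 : (inner ℂ u0 (((adjoint (E i)) ∘L T ∘L E j) u0) : ℂ) = c i j := by
          rw [h1, inner_smul_right, hu0self, mul_one]
        rw [← h2, comp_apply, comp_apply, adjoint_inner_right]
      set s := f.support with hs
      have hterm : ∀ i j, (inner ℂ (E i (g i)) (P (E j (g j))) : ℂ)
          = (inner ℂ (E i u0) (T (E j u0)) : ℂ) * (inner ℂ (E i (g i)) (R (E j (g j))) : ℂ) := by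
        intro i j
        have h1 : (inner ℂ (E i (g i)) (P (E j (g j))) : ℂ)
            = inner ℂ (g i) ((((adjoint (E i)) ∘L P ∘L E j)) (g j)) := by
          rw [comp_apply, comp_apply, adjoint_inner_right]
        rw [h1, hP i j, ContinuousLinearMap.mul_apply, hc i j]
        simp only [ContinuousLinearMap.smul_apply, ContinuousLinearMap.one_apply,
          ContinuousLinearMap.map_smul, inner_smul_right, comp_apply, adjoint_inner_right]
        rw [← hcval i j]
      have hx : (f.sum fun _i xi => xi) = ∑ i ∈ s, E i (g i) :=
        Finset.sum_congr rfl fun i _ => (hgspec i).symm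
      rw [hx]
      have hexp : (inner ℂ (∑ i ∈ s, E i (g i)) (P (∑ j ∈ s, E j (g j))) : ℂ)
          = ∑ i ∈ s, ∑ j ∈ s,
              (inner ℂ (E i u0) (T (E j u0)) : ℂ)
                * (inner ℂ (E i (g i)) (R (E j (g j))) : ℂ) := by
        simp only [map_sum, sum_inner, inner_sum]
        rw [Finset.sum_comm]
        exact Finset.sum_congr rfl fun i _ => Finset.sum_congr rfl fun j _ => hterm i j
      rw [hexp]
      have hswap : (∑ i ∈ s, ∑ j ∈ s,
              (inner ℂ (E i u0) (T (E j u0)) : ℂ)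
                * (inner ℂ (E i (g i)) (R (E j (g j))) : ℂ))
          = ∑ i ∈ s.attach, ∑ j ∈ s.attach,
              (inner ℂ (E i.1 u0) (T (E j.1 u0)) : ℂ)
                * (inner ℂ (E i.1 (g i.1)) (R (E j.1 (g j.1))) : ℂ) := by
        rw [← Finset.sum_attach s (fun i => ∑ j ∈ s,
          (inner ℂ (E i u0) (T (E j u0)) : ℂ)
            * (inner ℂ (E i (g i)) (R (E j (g j))) : ℂ))]
        exact Finset.sum_congr rfl fun i _ =>
          (Finset.sum_attach s (fun j =>
            (inner ℂ (E i.1 u0) (T (E j u0)) : ℂ)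
              * (inner ℂ (E i.1 (g i.1)) (R (E j (g j))) : ℂ))).symm
      rw [hswap]
      have hkey2 := key_lemma (n := {x : I // x ∈ s}) R T hR hT
        (fun i => E i.1 (g i.1)) (fun i => E i.1 u0)
      simpa only [Finset.univ_eq_attach] using hkey2
    · have hsub : Subsingleton K := not_nontrivial_iff_subsingleton.mp hK
      have hf0 : ∀ i, f i = 0 := by
        intro i
        rw [← hgspec i, Subsingleton.elim (g i) 0, map_zero]
      simp [Finsupp.sum, hf0]
  -- Step 2: extend by continuity, then conclude
  have hclosed : IsClosed {x : HK | 0 ≤ (inner ℂ x (P x) : ℂ)} := by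
    have hcont : Continuous fun x : HK => (inner ℂ x (P x) : ℂ) :=
      continuous_id.inner P.continuous
    have hset : {x : HK | 0 ≤ (inner ℂ x (P x) : ℂ)}
        = (fun x : HK => (inner ℂ x (P x) : ℂ)) ⁻¹' {z : ℂ | 0 ≤ z.re ∧ z.im = 0} := by
      ext x
      simp [Complex.le_def, eq_comm]
    rw [hset]
    exact ((isClosed_le continuous_const Complex.continuous_re).inter
      (isClosed_eq Complex.continuous_im continuous_const)).preimage hcont
  have hall : ∀ x : HK, 0 ≤ (inner ℂ x (P x) : ℂ) := by
    intro x
    have hd : Dense (↑(⨆ i, LinearMap.range ((E i : K →L[ℂ] HK) : K →ₗ[ℂ] HK)) : Set HK) :=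
      Submodule.dense_iff_topologicalClosure_eq_top.mpr htotal
    have hsub : (↑(⨆ i, LinearMap.range ((E i : K →L[ℂ] HK) : K →ₗ[ℂ] HK)) : Set HK)
        ⊆ {x : HK | 0 ≤ (inner ℂ x (P x) : ℂ)} := fun y hy => hkey y hy
    have hcl := hclosed.closure_subset_iff.mpr hsub
    have hx : x ∈ closure (↑(⨆ i, LinearMap.range ((E i : K →L[ℂ] HK) : K →ₗ[ℂ] HK)) : Set HK) := by
      rw [hd.closure_eq]; trivial
    exact hcl hx
  rw [ContinuousLinearMap.isPositive_iff_complex]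
  intro x
  have h := hall x
  have him : (inner ℂ x (P x) : ℂ).im = 0 := by
    have h2 := (Complex.le_def.mp h).2
    simpa using h2.symm
  have hre : 0 ≤ (inner ℂ x (P x) : ℂ).re := by
    have h2 := (Complex.le_def.mp h).1
    simpa using h2
  have heq : (inner ℂ (P x) x : ℂ) = inner ℂ x (P x) := by
    rw [← inner_conj_symm]
    exact Complex.conj_eq_iff_im.mpr him
  constructor
  · rw [heq]
    apply Complex.ext
    · simp
    · simpa using him.symm
  · rw [heq]
    simpa using hre
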